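/- arXiv:math/0007194 — 3 statements merged into one kernel-verified Lean document; each statement's English description precedes it below -/
import Mathlib

section
/- The number of permutations in S_n avoiding the patterns 132, 213, and 2341 equals f_{n+2} − 1 for all n ≥ 1, where f_n is the n-th Fibonacci number (f_1 = f_2 = 1). -/
/-- `σ` contains the pattern `p` (given as a sequence of values). -/
def PermContains {n k : ℕ} (σ : Equiv.Perm (Fin n)) (p : Fin k → Fin k) : Prop :=
  ∃ f : Fin k → Fin n, StrictMono f ∧ ∀ i j : Fin k, p i < p j ↔ σ (f i) < σ (f j)

/-- `σ` avoids the pattern `p`. -/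
def PermAvoids {n k : ℕ} (σ : Equiv.Perm (Fin n)) (p : Fin k → Fin k) : Prop :=
  ¬ PermContains σ p

def p123 : Fin 3 → Fin 3 := ![0, 1, 2]
def p132 : Fin 3 → Fin 3 := ![0, 2, 1]
def p213 : Fin 3 → Fin 3 := ![1, 0, 2]
def p231 : Fin 3 → Fin 3 := ![1, 2, 0]
def p312 : Fin 3 → Fin 3 := ![2, 0, 1]
def p321 : Fin 3 → Fin 3 := ![2, 1, 0]

/-- the list `a, a-1, ..., b` (empty if `b > a`). -/
def descList (a b : ℕ) : List ℕ := (List.range (a + 1 - b)).map (fun j => a - j)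

/-- the list `a, a+1, ..., b` (empty if `b > a`). -/
def ascList (a b : ℕ) : List ℕ := (List.range (b + 1 - a)).map (fun j => a + j)


open Equiv Fin Set


def AvSet (n : ℕ) : Set (Equiv.Perm (Fin n)) :=
  {σ | PermAvoids σ p132 ∧ PermAvoids σ p213 ∧ PermAvoids σ (![1, 2, 3, 0] : Fin 4 → Fin 4)}

/-- prepend the maximum value -/
def pT {n : ℕ} (τ : Perm (Fin n)) : Perm (Fin (n+1)) :=
  (finSuccEquiv n).trans ((Equiv.optionCongr τ).trans finSuccEquivLast.symm)

@[simp] lemma pT_zero {n : ℕ} (τ : Perm (Fin n)) : pT τ 0 = Fin.last n := by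
  simp [pT]

@[simp] lemma pT_succ {n : ℕ} (τ : Perm (Fin n)) (i : Fin n) :
    pT τ i.succ = (τ i).castSucc := by
  simp [pT]

def pTwo {n : ℕ} (τ : Perm (Fin n)) : Perm (Fin (n+2)) :=
  (Equiv.swap 0 1).trans (pT (pT τ))

@[simp] lemma pTwo_zero {n : ℕ} (τ : Perm (Fin n)) : pTwo τ 0 = (Fin.last n).castSucc := by
  have : pTwo τ 0 = pT (pT τ) 1 := by simp [pTwo]
  rw [this]
  have : (1 : Fin (n+2)) = (0 : Fin (n+1)).succ := rfl
  rw [this, pT_succ, pT_zero]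

@[simp] lemma pTwo_one {n : ℕ} (τ : Perm (Fin n)) : pTwo τ 1 = Fin.last (n+1) := by
  have : pTwo τ 1 = pT (pT τ) 0 := by simp [pTwo]
  rw [this, pT_zero]

@[simp] lemma pTwo_succ_succ {n : ℕ} (τ : Perm (Fin n)) (i : Fin n) :
    pTwo τ i.succ.succ = (τ i).castSucc.castSucc := by
  have h2 : Equiv.swap (0 : Fin (n+2)) 1 i.succ.succ = i.succ.succ := by
    apply Equiv.swap_apply_of_ne_of_ne
    · exact Fin.succ_ne_zero _
    · intro h
      rw [show (1 : Fin (n+2)) = (0:Fin (n+1)).succ from rfl] at h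
      exact Fin.succ_ne_zero _ (Fin.succ_injective _ h)
  have : pTwo τ i.succ.succ = pT (pT τ) i.succ.succ := by simp [pTwo, h2]
  rw [this, pT_succ, pT_succ]

lemma contains_pT_iff {n k : ℕ} (τ : Perm (Fin n)) (p : Fin (k+1) → Fin (k+1))
    (hp : ∃ j, p 0 < p j) :
    PermContains (pT τ) p ↔ PermContains τ p := by
  constructor
  · rintro ⟨f, hf, hiff⟩
    by_cases h0 : f 0 = 0
    · exfalso
      obtain ⟨j, hj⟩ := hp
      have hj0 : j ≠ 0 := by rintro rfl; exact lt_irrefl _ hj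
      have hfj : f 0 < f j := hf (Fin.pos_of_ne_zero hj0)
      have hfj0 : f j ≠ 0 := by rw [h0] at hfj; exact Fin.pos_iff_ne_zero.mp hfj
      obtain ⟨i, hi⟩ := Fin.exists_succ_eq.mpr hfj0
      have h2 : pT τ (f 0) < pT τ (f j) := (hiff 0 j).mp hj
      rw [h0, pT_zero, ← hi, pT_succ] at h2
      exact absurd h2 (Fin.castSucc_lt_last (τ i)).asymm
    · have hne : ∀ i, f i ≠ 0 := fun i => by
        intro h
        exact h0 (le_antisymm (h ▸ hf.monotone (Fin.zero_le i)) (Fin.zero_le _))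
      have key : ∀ i, pT τ (f i) = ((τ ((f i).pred (hne i))).castSucc) := fun i => by
        conv_lhs => rw [← Fin.succ_pred (f i) (hne i)]
        rw [pT_succ]
      refine ⟨fun i => (f i).pred (hne i), fun a b hab => by
        simpa [Fin.pred_lt_pred_iff] using hf hab, fun a b => ?_⟩
      rw [hiff a b, key a, key b, Fin.castSucc_lt_castSucc_iff]
  · rintro ⟨f, hf, hiff⟩
    refine ⟨fun i => (f i).succ, fun a b hab => Fin.succ_lt_succ_iff.mpr (hf hab), ?_⟩
    intro a b
    rw [hiff a b, pT_succ, pT_succ, Fin.castSucc_lt_castSucc_iff]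

lemma two_le_ex {n : ℕ} (x : Fin (n+2)) (h : 2 ≤ x.val) : ∃ i : Fin n, x = i.succ.succ :=
  ⟨⟨x.val - 2, by omega⟩, by ext; simp [Fin.val_succ]; omega⟩

lemma contains_pTwo_iff {n k : ℕ} (τ : Perm (Fin n)) (p : Fin (k+2) → Fin (k+2))
    (hp : ∃ j, j ≠ 1 ∧ p 0 < p j) :
    PermContains (pTwo τ) p ↔ PermContains τ p := by
  have hmax : ∀ i : Fin n, (τ i).castSucc.castSucc < (Fin.last n).castSucc := fun i => by
    simp [Fin.lt_def]
  constructor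
  · rintro ⟨f, hf, hiff⟩
    by_cases h0 : f 0 = 0
    · by_cases h1 : f 1 = 1
      · exfalso
        obtain ⟨j, hj1, hj⟩ := hp
        have hj0 : j ≠ 0 := by rintro rfl; exact lt_irrefl _ hj
        have hjge : (1 : Fin (k+2)) < j := by
          rw [Fin.lt_def]
          have := Fin.pos_of_ne_zero hj0
          rw [Fin.lt_def] at this
          rcases Nat.lt_or_ge j.val 2 with h | h
          · exfalso; apply hj1; ext; simp at this ⊢; omega
          · simp; omega
        have hfj : f 1 < f j := hf hjge
        rw [h1] at hfj
        have : 2 ≤ (f j).val := by rw [Fin.lt_def] at hfj; simp at hfj; omega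
        obtain ⟨i, hi⟩ := two_le_ex _ this
        have h2 : pTwo τ (f 0) < pTwo τ (f j) := (hiff 0 j).mp hj
        rw [h0, hi, pTwo_zero, pTwo_succ_succ] at h2
        exact absurd h2 (hmax i).asymm
      · exfalso
        obtain ⟨j, hj1, hj⟩ := hp
        have hj0 : j ≠ 0 := by rintro rfl; exact lt_irrefl _ hj
        have hf1 : 2 ≤ (f 1).val := by
          have : f 0 < f 1 := hf (by rw [Fin.lt_def]; simp)
          rw [h0, Fin.lt_def] at this
          simp at this
          rcases Nat.lt_or_ge (f 1).val 2 with h | h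
          · exfalso; apply h1; ext; simp; omega
          · exact h
        have hjge : 2 ≤ (f j).val := by
          rcases eq_or_ne j 1 with rfl | hne
          · exact hf1
          · have h1j : (1 : Fin (k+2)) ≤ j := by
              rw [Fin.le_def]
              have := Fin.pos_of_ne_zero hj0
              rw [Fin.lt_def] at this
              simp at this ⊢
              omega
            rcases lt_or_eq_of_le h1j with h | h
            · have : f 1 < f j := hf h
              omega
            · exact absurd h.symm hne
        obtain ⟨i, hi⟩ := two_le_ex _ hjge
        have h2 : pTwo τ (f 0) < pTwo τ (f j) := (hiff 0 j).mp hj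
        rw [h0, hi, pTwo_zero, pTwo_succ_succ] at h2
        exact absurd h2 (hmax i).asymm
    · by_cases h1 : f 0 = 1
      · exfalso
        obtain ⟨j, hj1, hj⟩ := hp
        have hj0 : j ≠ 0 := by rintro rfl; exact lt_irrefl _ hj
        have hjge : 2 ≤ (f j).val := by
          have : f 0 < f j := hf (Fin.pos_of_ne_zero hj0)
          rw [h1, Fin.lt_def] at this
          simp at this; omega
        obtain ⟨i, hi⟩ := two_le_ex _ hjge
        have h2 : pTwo τ (f 0) < pTwo τ (f j) := (hiff 0 j).mp hj
        rw [h1, hi, pTwo_one, pTwo_succ_succ] at h2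
        exact absurd h2 (Fin.castSucc_lt_last _).asymm
      · have hge : ∀ i, 2 ≤ (f i).val := fun i => by
          have h00 : 2 ≤ (f 0).val := by
            have hne0 : (f 0).val ≠ 0 := fun h => h0 (by ext; simpa using h)
            have hne1 : (f 0).val ≠ 1 := fun h => h1 (by ext; simpa using h)
            omega
          have : f 0 ≤ f i := hf.monotone (Fin.zero_le i)
          rw [Fin.le_def] at this
          omega
        set g : Fin (k+2) → Fin n := fun i => ⟨(f i).val - 2, by have := hge i; have := (f i).isLt; omega⟩ with hg
        have hgi : ∀ i, f i = (g i).succ.succ := fun i => by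
          ext; simp [hg, Fin.val_succ]; have := hge i; omega
        refine ⟨g, fun a b hab => by
          have := hf hab
          rw [Fin.lt_def] at this ⊢
          simp only [hg]
          have := hge a
          omega, fun a b => ?_⟩
        rw [hiff a b, hgi a, hgi b, pTwo_succ_succ, pTwo_succ_succ,
          Fin.castSucc_lt_castSucc_iff, Fin.castSucc_lt_castSucc_iff]
  · rintro ⟨f, hf, hiff⟩
    refine ⟨fun i => (f i).succ.succ, fun a b hab => by
      simpa [Fin.succ_lt_succ_iff] using hf hab, fun a b => ?_⟩
    rw [hiff a b, pTwo_succ_succ, pTwo_succ_succ,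
      Fin.castSucc_lt_castSucc_iff, Fin.castSucc_lt_castSucc_iff]

lemma pT_mem_iff {n : ℕ} (τ : Perm (Fin n)) : pT τ ∈ AvSet (n+1) ↔ τ ∈ AvSet n := by
  unfold AvSet PermAvoids
  simp only [Set.mem_setOf_eq]
  rw [contains_pT_iff τ p132 (by decide), contains_pT_iff τ p213 (by decide),
    contains_pT_iff τ (![1,2,3,0] : Fin 4 → Fin 4) (by decide)]

lemma pTwo_mem_iff {n : ℕ} (τ : Perm (Fin n)) : pTwo τ ∈ AvSet (n+2) ↔ τ ∈ AvSet n := by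
  unfold AvSet PermAvoids
  simp only [Set.mem_setOf_eq]
  rw [contains_pTwo_iff τ p132 ⟨2, by decide, by decide⟩,
    contains_pTwo_iff τ p213 ⟨2, by decide, by decide⟩,
    contains_pTwo_iff τ (![1,2,3,0] : Fin 4 → Fin 4) ⟨2, by decide, by decide⟩]

lemma one_mem_avset {n : ℕ} : (1 : Perm (Fin n)) ∈ AvSet n := by
  refine ⟨?_, ?_, ?_⟩ <;> rintro ⟨f, hf, hiff⟩
  · have h := (hiff 1 2).mpr
    simp only [Equiv.Perm.one_apply] at h
    exact absurd (h (hf (by decide))) (by decide)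
  · have h := (hiff 0 1).mpr
    simp only [Equiv.Perm.one_apply] at h
    exact absurd (h (hf (by decide))) (by decide)
  · have h := (hiff 0 3).mpr
    simp only [Equiv.Perm.one_apply] at h
    exact absurd (h (hf (by decide))) (by decide)

lemma eq_pT {n : ℕ} (σ : Perm (Fin (n+1))) (h : σ 0 = Fin.last n) : ∃ τ, σ = pT τ := by
  have hlt : ∀ i : Fin n, (σ i.succ).val < n := fun i => by
    have hne : σ i.succ ≠ Fin.last n := by
      rw [← h]; intro he; exact Fin.succ_ne_zero i (σ.injective he)
    have h1 := (σ i.succ).isLt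
    have h2 : (σ i.succ).val ≠ n := fun hv => hne (Fin.ext (by simpa using hv))
    omega
  set g : Fin n → Fin n := fun i => ⟨(σ i.succ).val, hlt i⟩ with hgdef
  have hginj : Function.Injective g := fun a b hab => by
    simp only [hgdef, Fin.mk.injEq] at hab
    exact Fin.succ_injective _ (σ.injective (Fin.ext hab))
  refine ⟨Equiv.ofBijective g (Finite.injective_iff_bijective.mp hginj), ?_⟩
  apply Equiv.ext
  intro j
  induction j using Fin.cases with
  | zero => simpa using h
  | succ i =>
    rw [pT_succ, Equiv.ofBijective_apply]
    ext
    simp [hgdef]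

lemma eq_pTwo {n : ℕ} (σ : Perm (Fin (n+2))) (h0 : σ 0 = (Fin.last n).castSucc)
    (h1 : σ 1 = Fin.last (n+1)) : ∃ τ, σ = pTwo τ := by
  have hlt : ∀ i : Fin n, (σ i.succ.succ).val < n := fun i => by
    have hne0 : σ i.succ.succ ≠ (Fin.last n).castSucc := by
      rw [← h0]; intro he; exact Fin.succ_ne_zero _ (σ.injective he)
    have hne1 : σ i.succ.succ ≠ Fin.last (n+1) := by
      rw [← h1]; intro he
      have := σ.injective he
      rw [show (1 : Fin (n+2)) = (0 : Fin (n+1)).succ from rfl] at this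
      exact Fin.succ_ne_zero _ (Fin.succ_injective _ this)
    have hv1 := (σ i.succ.succ).isLt
    have hv2 : (σ i.succ.succ).val ≠ n := fun hv => hne0 (Fin.ext (by simpa using hv))
    have hv3 : (σ i.succ.succ).val ≠ n+1 := fun hv => hne1 (Fin.ext (by simpa using hv))
    omega
  set g : Fin n → Fin n := fun i => ⟨(σ i.succ.succ).val, hlt i⟩ with hgdef
  have hginj : Function.Injective g := fun a b hab => by
    simp only [hgdef, Fin.mk.injEq] at hab
    exact Fin.succ_injective _ (Fin.succ_injective _ (σ.injective (Fin.ext hab)))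
  refine ⟨Equiv.ofBijective g (Finite.injective_iff_bijective.mp hginj), ?_⟩
  apply Equiv.ext
  intro j
  induction j using Fin.cases with
  | zero => simpa using h0
  | succ j' =>
    induction j' using Fin.cases with
    | zero => simpa using h1
    | succ i =>
      rw [pTwo_succ_succ, Equiv.ofBijective_apply]
      ext
      simp [hgdef]

lemma C1 {m : ℕ} {σ : Perm (Fin (m+1))} (h : PermAvoids σ p213) {i j : Fin (m+1)}
    (hi : 0 < i) (hij : i < j) (h1 : σ i < σ 0) (h2 : σ 0 < σ j) : False := by
  apply h
  rw [Fin.lt_def] at hi hij h1 h2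
  refine ⟨![0, i, j], ?_, ?_⟩
  · intro a b hab
    rw [Fin.lt_def] at hab ⊢
    fin_cases a <;> fin_cases b <;> simp_all <;> omega
  · intro a b
    rw [Fin.lt_def, Fin.lt_def]
    fin_cases a <;> fin_cases b <;> simp [p213] <;> omega

lemma C2 {m : ℕ} {σ : Perm (Fin (m+1))} (h : PermAvoids σ p132) {i j : Fin (m+1)}
    (hi : 0 < i) (hij : i < j) (h1 : σ 0 < σ j) (h2 : σ j < σ i) : False := by
  apply h
  rw [Fin.lt_def] at hi hij h1 h2
  refine ⟨![0, i, j], ?_, ?_⟩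
  · intro a b hab
    rw [Fin.lt_def] at hab ⊢
    fin_cases a <;> fin_cases b <;> simp_all <;> omega
  · intro a b
    rw [Fin.lt_def, Fin.lt_def]
    fin_cases a <;> fin_cases b <;> simp [p132] <;> omega

lemma C3 {m : ℕ} {σ : Perm (Fin (m+1))} (h : PermAvoids σ (![1,2,3,0] : Fin 4 → Fin 4))
    {i j l : Fin (m+1)}
    (hi : 0 < i) (hij : i < j) (hjl : j < l)
    (h1 : σ 0 < σ i) (h2 : σ i < σ j) (h3 : σ l < σ 0) : False := by
  apply h
  rw [Fin.lt_def] at hi hij hjl h1 h2 h3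
  refine ⟨![0, i, j, l], ?_, ?_⟩
  · intro a b hab
    rw [Fin.lt_def] at hab ⊢
    fin_cases a <;> fin_cases b <;> simp_all <;> omega
  · intro a b
    rw [Fin.lt_def, Fin.lt_def]
    fin_cases a <;> fin_cases b <;> simp <;> omega

lemma classify {m : ℕ} {σ : Perm (Fin (m+3))} (h : σ ∈ AvSet (m+3)) :
    σ = 1 ∨ (σ 0 = Fin.last (m+2)) ∨
      (σ 0 = (Fin.last (m+1)).castSucc ∧ σ 1 = Fin.last (m+2)) := by
  obtain ⟨h132, h213, h2341⟩ := h
  by_cases htop : σ 0 = Fin.last (m+2)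
  · exact Or.inr (Or.inl htop)
  by_cases hzero : σ 0 = 0
  · left
    have hsm : StrictMono σ := by
      intro i j hij
      rcases eq_or_ne i 0 with rfl | hi0
      · rw [hzero]
        have : σ j ≠ 0 := by rw [← hzero]; exact fun he => (Fin.pos_iff_ne_zero.mp hij) (σ.injective he)
        exact Fin.pos_of_ne_zero this
      · have hi : 0 < i := Fin.pos_of_ne_zero hi0
        have hne : σ i ≠ σ j := fun he => (ne_of_lt hij) (σ.injective he)
        rcases lt_or_gt_of_ne hne with h' | h'
        · exact h'
        · exfalso
          have h0j : σ 0 < σ j := by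
            rw [hzero]
            have : σ j ≠ 0 := by
              rw [← hzero]; exact fun he => (Fin.pos_iff_ne_zero.mp (hi.trans hij)) (σ.injective he)
            exact Fin.pos_of_ne_zero this
          exact C2 h132 hi hij h0j h'
    have : ⇑σ = id := (@StrictMono.range_inj (Fin (m+3)) (Fin (m+3)) _ _ (Finite.to_wellFoundedLT)
        σ id hsm strictMono_id).mp (by
      rw [Set.range_id]
      exact Set.range_eq_univ.mpr σ.surjective)
    apply Equiv.coe_fn_injective
    show ⇑σ = ⇑(1 : Perm (Fin (m+3)))
    rw [Equiv.Perm.coe_one]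
    exact this
  · right; right
    have ha_pos : (0:ℕ) < (σ 0).val := by
      rcases Nat.eq_zero_or_pos (σ 0).val with h' | h'
      · exact absurd (Fin.ext (by simpa using h') : σ 0 = 0) hzero
      · exact h'
    have ha_lt : (σ 0).val < m + 2 := by
      have := (σ 0).isLt
      have : (σ 0).val ≠ m + 2 := fun h' => htop (Fin.ext (by simpa using h'))
      omega
    set q := σ.symm (Fin.last (m+2)) with hqdef
    set s := σ.symm 0 with hsdef
    have hq : σ q = Fin.last (m+2) := σ.apply_symm_apply _
    have hs : σ s = 0 := σ.apply_symm_apply _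
    have hq0 : q ≠ 0 := by
      intro he
      have h2 := congrArg σ he
      rw [hq] at h2
      exact htop h2.symm
    have hs0 : s ≠ 0 := by
      intro he
      have h2 := congrArg σ he
      rw [hs] at h2
      exact hzero h2.symm
    have hs_lt : σ s < σ 0 := by rw [hs]; exact Fin.pos_of_ne_zero hzero
    have hq_gt : σ 0 < σ q := by rw [hq, Fin.lt_def]; simpa using ha_lt
    have hqs : q < s := by
      rcases lt_trichotomy q s with h' | h' | h'
      · exact h'
      · exfalso; rw [h', hs] at hq; exact absurd hq.symm (Fin.ext_iff.not.mpr (by simp))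
      · exact absurd (C1 h213 (Fin.pos_of_ne_zero hs0) h' hs_lt hq_gt) not_false
    -- show (σ 0).val = m + 1
    have haval : (σ 0).val = m + 1 := by
      by_contra hcon
      have hb_lt : (σ 0).val + 1 < m + 2 := by omega
      set b : Fin (m+3) := ⟨(σ 0).val + 1, by omega⟩ with hbdef
      set r := σ.symm b with hrdef
      have hr : σ r = b := σ.apply_symm_apply _
      have hr0 : r ≠ 0 := by
        intro he
        rw [he, hbdef] at hr
        have := congrArg Fin.val hr
        simp at this
      have hrb_gt : σ 0 < σ r := by rw [hr, Fin.lt_def, hbdef]; simp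
      have hrb_lt_last : σ r < σ q := by rw [hr, hq, Fin.lt_def, hbdef]; simpa using hb_lt
      have hrs : r < s := by
        rcases lt_trichotomy r s with h' | h' | h'
        · exact h'
        · exfalso
          rw [h', hs, hbdef] at hr
          have := congrArg Fin.val hr
          simp at this
        · exact absurd (C1 h213 (Fin.pos_of_ne_zero hs0) h' hs_lt hrb_gt) not_false
      have hrq : r ≠ q := by
        intro he
        rw [he, hq, hbdef] at hr
        have := congrArg Fin.val hr
        simp at this
        omega
      rcases lt_or_gt_of_ne hrq with h' | h'
      · exact C3 h2341 (Fin.pos_of_ne_zero hr0) h' hqs hrb_gt hrb_lt_last hs_lt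
      · exact C2 h132 (Fin.pos_of_ne_zero hq0) h' hrb_gt hrb_lt_last
    constructor
    · exact Fin.ext (by simpa using haval)
    · -- q = 1
      have hq1 : q = 1 := by
        by_contra hcon
        have hq2 : (1:Fin (m+3)) < q := by
          rw [Fin.lt_def]
          have h1 : q.val ≠ 0 := fun h' => hq0 (Fin.ext (by simpa using h'))
          have h2 : q.val ≠ 1 := fun h' => hcon (Fin.ext (by simpa using h'))
          simp
          omega
        have h1a : σ 1 < σ 0 := by
          have hne1 : σ 1 ≠ σ 0 := fun he => absurd (σ.injective he) (by simp)
          have hne2 : (σ 1).val ≠ m + 2 := by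
            intro h'
            have : σ 1 = Fin.last (m+2) := Fin.ext (by simpa using h')
            rw [← hq] at this
            have := σ.injective this
            rw [← this] at hq2
            exact absurd hq2 (lt_irrefl _)
          rw [Fin.lt_def]
          have := (σ 1).isLt
          have hne1' : (σ 1).val ≠ (σ 0).val := fun h' => hne1 (Fin.ext h')
          omega
        exact absurd (C1 h213 (by simp [Fin.lt_def]) hq2 h1a hq_gt) not_false
      rw [← hq1, hq]

lemma pT_injective {n : ℕ} : Function.Injective (pT (n := n)) := by
  intro a b hab
  apply Equiv.ext; intro i
  have h2 := congrArg (fun σ : Perm (Fin (n+1)) => σ i.succ) hab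
  simp only [pT_succ] at h2
  exact Fin.castSucc_injective _ h2

lemma pTwo_injective {n : ℕ} : Function.Injective (pTwo (n := n)) := by
  intro a b hab
  apply Equiv.ext; intro i
  have h2 := congrArg (fun σ : Perm (Fin (n+2)) => σ i.succ.succ) hab
  simp only [pTwo_succ_succ] at h2
  exact Fin.castSucc_injective _ (Fin.castSucc_injective _ h2)

lemma avset_decomp (m : ℕ) :
    AvSet (m+3) = ({1} ∪ pT '' AvSet (m+2)) ∪ pTwo '' AvSet (m+1) := by
  ext σ
  constructor
  · intro h
    rcases classify h with rfl | htop | ⟨h0, h1⟩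
    · exact Or.inl (Or.inl rfl)
    · obtain ⟨τ, rfl⟩ := eq_pT σ htop
      exact Or.inl (Or.inr ⟨τ, (pT_mem_iff τ).mp h, rfl⟩)
    · obtain ⟨τ, rfl⟩ := eq_pTwo σ h0 h1
      exact Or.inr ⟨τ, (pTwo_mem_iff τ).mp h, rfl⟩
  · rintro ((rfl | ⟨τ, hτ, rfl⟩) | ⟨τ, hτ, rfl⟩)
    · exact one_mem_avset
    · exact (pT_mem_iff τ).mpr hτ
    · exact (pTwo_mem_iff τ).mpr hτ

lemma avset_small (n : ℕ) (hn : n ≤ 2) : AvSet n = Set.univ := by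
  ext σ
  simp only [Set.mem_univ, iff_true]
  refine ⟨?_, ?_, ?_⟩ <;> rintro ⟨f, hf, -⟩
  · have h1 := hf (show (0:Fin 3) < 1 by decide)
    have h2 := hf (show (1:Fin 3) < 2 by decide)
    rw [Fin.lt_def] at h1 h2
    have := (f 2).isLt
    omega
  · have h1 := hf (show (0:Fin 3) < 1 by decide)
    have h2 := hf (show (1:Fin 3) < 2 by decide)
    rw [Fin.lt_def] at h1 h2
    have := (f 2).isLt
    omega
  · have h1 := hf (show (0:Fin 4) < 1 by decide)
    have h2 := hf (show (1:Fin 4) < 2 by decide)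
    rw [Fin.lt_def] at h1 h2
    have := (f 2).isLt
    omega

lemma ncard_avset : ∀ m : ℕ, (AvSet (m+1)).ncard = Nat.fib (m+3) - 1 := by
  intro m
  induction m using Nat.strong_induction_on with
  | _ m ih =>
    match m with
    | 0 =>
      rw [avset_small 1 (by norm_num), Set.ncard_univ, Nat.card_eq_fintype_card,
        Fintype.card_perm]
      decide
    | 1 =>
      rw [avset_small 2 (by norm_num), Set.ncard_univ, Nat.card_eq_fintype_card,
        Fintype.card_perm]
      decide
    | (k+2) =>
      have h1 := ih (k+1) (by omega)
      have h2 := ih k (by omega)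
      have hd1 : Disjoint ({1} ∪ pT '' AvSet (k+2) : Set (Perm (Fin (k+3)))) (pTwo '' AvSet (k+1)) := by
        rw [Set.disjoint_left]
        rintro σ (rfl | ⟨τ, -, rfl⟩) ⟨τ', -, he⟩
        · have := congrArg (fun σ : Perm (Fin (k+3)) => (σ 0).val) he
          simp at this
        · have := congrArg (fun σ : Perm (Fin (k+3)) => (σ 0).val) he
          simp at this
      have hd2 : Disjoint ({1} : Set (Perm (Fin (k+3)))) (pT '' AvSet (k+2)) := by
        rw [Set.disjoint_left]
        rintro σ rfl ⟨τ, -, he⟩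
        have := congrArg (fun σ : Perm (Fin (k+3)) => (σ 0).val) he
        simp at this
      rw [show k+2+1 = k+3 from rfl, avset_decomp k,
        Set.ncard_union_eq hd1 (Set.toFinite _) (Set.toFinite _),
        Set.ncard_union_eq hd2 (Set.toFinite _) (Set.toFinite _),
        Set.ncard_singleton,
        Set.ncard_image_of_injective _ pT_injective,
        Set.ncard_image_of_injective _ pTwo_injective,
        h1, h2]
      have f1 : Nat.fib (k+2+3) = Nat.fib (k+1+3) + Nat.fib (k+3) := by
        rw [show k+2+3 = (k+3)+2 from by omega, Nat.fib_add_two,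
          show k+3+1 = k+1+3 from by omega]
        omega
      have p1 : 0 < Nat.fib (k+3) := Nat.fib_pos.mpr (by omega)
      have p2 : 0 < Nat.fib (k+1+3) := Nat.fib_pos.mpr (by omega)
      omega

theorem stmt12 :
    ∀ n, 1 ≤ n → Nat.card {σ : Equiv.Perm (Fin n) //
      PermAvoids σ p132 ∧ PermAvoids σ p213 ∧ PermAvoids σ (![1, 2, 3, 0] : Fin 4 → Fin 4)}
      = Nat.fib (n + 2) - 1 := by
  intro n hn
  obtain ⟨m, rfl⟩ : ∃ m, n = m + 1 := ⟨n - 1, by omega⟩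
  exact (Nat.card_coe_set_eq (AvSet (m+1))).trans (ncard_avset m)
end

section
/- For any permutation τ ∈ S_k avoiding both 213 and 231, with τ = (τ_1, τ') where τ' is τ with its first entry removed (and values rescaled to {1,...,k−1}), the number d_τ(n) of permutations in S_n avoiding 213, 231, and τ satisfies d_τ(n) = d_τ(n−1) + d_{τ'}(n−1) for all n ≥ k. -/
namespace Stmt14Aux

variable {m k : ℕ}

def low (σ' : Equiv.Perm (Fin m)) : Equiv.Perm (Fin (m + 1)) :=
  Equiv.Perm.decomposeFin.symm (0, σ')

@[simp] lemma low_zero (σ' : Equiv.Perm (Fin m)) : low σ' 0 = 0 :=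
  Equiv.Perm.decomposeFin_symm_apply_zero 0 σ'

@[simp] lemma low_succ (σ' : Equiv.Perm (Fin m)) (i : Fin m) :
    low σ' i.succ = (σ' i).succ := by
  simp [low, Equiv.Perm.decomposeFin_symm_apply_succ, Equiv.swap_self]

def high (σ' : Equiv.Perm (Fin m)) : Equiv.Perm (Fin (m + 1)) :=
  (low (σ'.trans Fin.revPerm)).trans Fin.revPerm

@[simp] lemma high_zero (σ' : Equiv.Perm (Fin m)) : high σ' 0 = Fin.last m := by
  simp [high, Fin.rev_zero]

@[simp] lemma high_succ (σ' : Equiv.Perm (Fin m)) (i : Fin m) :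
    high σ' i.succ = (σ' i).castSucc := by
  simp [high, Fin.rev_succ, Fin.rev_rev]

lemma low_injective : Function.Injective (low (m := m)) := by
  intro a b h
  ext i
  have h2 : a i = b i := Fin.succ_inj.mp (by rw [← low_succ a i, ← low_succ b i, h])
  rw [h2]

lemma high_injective : Function.Injective (high (m := m)) := by
  intro a b h
  ext i
  have h2 : a i = b i := Fin.castSucc_inj.mp (by rw [← high_succ a i, ← high_succ b i, h])
  rw [h2]

lemma exists_low (σ : Equiv.Perm (Fin (m + 1))) (h0 : σ 0 = 0) : ∃ σ', low σ' = σ := by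
  rcases hσ : Equiv.Perm.decomposeFin σ with ⟨p, e⟩
  have hs : Equiv.Perm.decomposeFin.symm (p, e) = σ := by
    rw [← hσ]; exact Equiv.symm_apply_apply _ _
  have hp : p = 0 := by
    rw [← h0, ← hs, Equiv.Perm.decomposeFin_symm_apply_zero]
  exact ⟨e, by show Equiv.Perm.decomposeFin.symm (0, e) = σ; rw [← hp]; exact hs⟩

lemma exists_high (σ : Equiv.Perm (Fin (m + 1))) (h0 : σ 0 = Fin.last m) :
    ∃ σ', high σ' = σ := by
  obtain ⟨e, he⟩ := exists_low (σ.trans Fin.revPerm) (by simp [h0, Fin.rev_last])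
  refine ⟨e.trans Fin.revPerm, ?_⟩
  have h2 : (e.trans Fin.revPerm).trans Fin.revPerm = e := by
    ext i; simp [Fin.rev_rev]
  rw [high, h2, he]
  ext i; simp [Fin.rev_rev]

/-- a 213- and 231-avoiding permutation starts with its min or max. -/
lemma first_extreme {j : ℕ} (σ : Equiv.Perm (Fin (j + 1)))
    (h1 : PermAvoids σ p213) (h2 : PermAvoids σ p231) :
    σ 0 = 0 ∨ σ 0 = Fin.last j := by
  by_contra hc
  push_neg at hc
  obtain ⟨hne0, hnelast⟩ := hc
  have hpos : 0 < σ 0 := Fin.pos_of_ne_zero hne0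
  have hlt : σ 0 < Fin.last j := lt_of_le_of_ne (Fin.le_last _) hnelast
  obtain ⟨a, ha⟩ : ∃ a, σ a = 0 := ⟨σ.symm 0, Equiv.apply_symm_apply _ _⟩
  obtain ⟨b, hb⟩ : ∃ b, σ b = Fin.last j := ⟨σ.symm (Fin.last j), Equiv.apply_symm_apply _ _⟩
  have ha0 : 0 < a := Fin.pos_of_ne_zero (fun h => hne0 (h ▸ ha))
  have hb0 : 0 < b := Fin.pos_of_ne_zero (fun h => hnelast (h ▸ hb))
  rcases lt_trichotomy a b with hab | hab | hab
  · apply h1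
    refine ⟨![0, a, b], ?_, ?_⟩
    · intro x y hxy
      fin_cases x <;> fin_cases y <;> simp_all <;> exact ha0.trans hab
    · intro x y
      fin_cases x <;> fin_cases y <;> simp_all [p213] <;>
        first
          | exact hpos.trans hlt
          | exact Fin.le_last _
  · exfalso
    rw [hab, hb] at ha
    exact absurd (ha ▸ hpos.trans hlt) (lt_irrefl _)
  · apply h2
    refine ⟨![0, b, a], ?_, ?_⟩
    · intro x y hxy
      fin_cases x <;> fin_cases y <;> simp_all <;> exact hb0.trans hab
    · intro x y
      fin_cases x <;> fin_cases y <;> simp_all [p231] <;>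
        first
          | exact hpos.trans hlt
          | exact Fin.le_last _

lemma contains_comp {n n' k : ℕ} (σ : Equiv.Perm (Fin n)) (σ' : Equiv.Perm (Fin n'))
    (g : Fin n' → Fin n) (hg : StrictMono g)
    (hvals : ∀ a b : Fin n', σ' a < σ' b ↔ σ (g a) < σ (g b))
    {p : Fin k → Fin k} : PermContains σ' p → PermContains σ p
  | ⟨f, hf, h⟩ => ⟨g ∘ f, hg.comp hf, fun i j => (h i j).trans (hvals _ _)⟩

lemma low_contains {p : Fin k → Fin k} (σ' : Equiv.Perm (Fin m)) :
    PermContains σ' p → PermContains (low σ') p :=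
  contains_comp _ _ Fin.succ Fin.strictMono_succ
    (fun a b => by rw [low_succ, low_succ, Fin.succ_lt_succ_iff])

lemma high_contains {p : Fin k → Fin k} (σ' : Equiv.Perm (Fin m)) :
    PermContains σ' p → PermContains (high σ') p :=
  contains_comp _ _ Fin.succ Fin.strictMono_succ
    (fun a b => by rw [high_succ, high_succ, Fin.castSucc_lt_castSucc_iff])

lemma of_low_contains {p : Fin (k + 1) → Fin (k + 1)} (σ' : Equiv.Perm (Fin m))
    (hp : ∃ j, p j < p 0) : PermContains (low σ') p → PermContains σ' p := by
  rintro ⟨f, hf, h⟩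
  have hf0 : f 0 ≠ 0 := by
    intro h0
    obtain ⟨j, hj⟩ := hp
    have h2 := (h j 0).mp hj
    rw [h0, low_zero] at h2
    exact absurd h2 (Fin.not_lt_zero _)
  have hne : ∀ i, f i ≠ 0 := by
    intro i hi
    exact hf0 (Fin.le_zero_iff.mp (hi ▸ hf.monotone (Fin.zero_le i)))
  have hval : ∀ i, low σ' (f i) = (σ' ((f i).pred (hne i))).succ := by
    intro i
    conv_lhs => rw [← Fin.succ_pred (f i) (hne i)]
    rw [low_succ]
  refine ⟨fun i => (f i).pred (hne i), fun i j hij => Fin.pred_lt_pred_iff.mpr (hf hij),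
    fun i j => ?_⟩
  rw [h i j, hval i, hval j, Fin.succ_lt_succ_iff]

lemma of_high_contains {p : Fin (k + 1) → Fin (k + 1)} (σ' : Equiv.Perm (Fin m))
    (hp : ∃ j, p 0 < p j) : PermContains (high σ') p → PermContains σ' p := by
  rintro ⟨f, hf, h⟩
  have hf0 : f 0 ≠ 0 := by
    intro h0
    obtain ⟨j, hj⟩ := hp
    have h2 := (h 0 j).mp hj
    rw [h0, high_zero] at h2
    exact absurd h2 (not_lt.mpr (Fin.le_last _))
  have hne : ∀ i, f i ≠ 0 := by
    intro i hi
    exact hf0 (Fin.le_zero_iff.mp (hi ▸ hf.monotone (Fin.zero_le i)))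
  have hval : ∀ i, high σ' (f i) = (σ' ((f i).pred (hne i))).castSucc := by
    intro i
    conv_lhs => rw [← Fin.succ_pred (f i) (hne i)]
    rw [high_succ]
  refine ⟨fun i => (f i).pred (hne i), fun i j hij => Fin.pred_lt_pred_iff.mpr (hf hij),
    fun i j => ?_⟩
  rw [h i j, hval i, hval j, Fin.castSucc_lt_castSucc_iff]

lemma of_low_contains_tail {p : Fin (k + 1) → Fin (k + 1)} {q : Fin k → Fin k}
    (hpq : ∀ i j : Fin k, q i < q j ↔ p i.succ < p j.succ) (σ' : Equiv.Perm (Fin m)) :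
    PermContains (low σ') p → PermContains σ' q := by
  rintro ⟨f, hf, h⟩
  have hne : ∀ i : Fin k, f i.succ ≠ 0 := fun i =>
    Fin.pos_iff_ne_zero.mp (lt_of_le_of_lt (Fin.zero_le (f 0)) (hf (Fin.succ_pos i)))
  have hval : ∀ i, low σ' (f i.succ) = (σ' ((f i.succ).pred (hne i))).succ := by
    intro i
    conv_lhs => rw [← Fin.succ_pred (f i.succ) (hne i)]
    rw [low_succ]
  refine ⟨fun i => (f i.succ).pred (hne i),
    fun i j hij => Fin.pred_lt_pred_iff.mpr (hf (Fin.succ_lt_succ_iff.mpr hij)),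
    fun i j => ?_⟩
  rw [hpq i j, h i.succ j.succ, hval i, hval j, Fin.succ_lt_succ_iff]

lemma of_high_contains_tail {p : Fin (k + 1) → Fin (k + 1)} {q : Fin k → Fin k}
    (hpq : ∀ i j : Fin k, q i < q j ↔ p i.succ < p j.succ) (σ' : Equiv.Perm (Fin m)) :
    PermContains (high σ') p → PermContains σ' q := by
  rintro ⟨f, hf, h⟩
  have hne : ∀ i : Fin k, f i.succ ≠ 0 := fun i =>
    Fin.pos_iff_ne_zero.mp (lt_of_le_of_lt (Fin.zero_le (f 0)) (hf (Fin.succ_pos i)))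
  have hval : ∀ i, high σ' (f i.succ) = (σ' ((f i.succ).pred (hne i))).castSucc := by
    intro i
    conv_lhs => rw [← Fin.succ_pred (f i.succ) (hne i)]
    rw [high_succ]
  refine ⟨fun i => (f i.succ).pred (hne i),
    fun i j hij => Fin.pred_lt_pred_iff.mpr (hf (Fin.succ_lt_succ_iff.mpr hij)),
    fun i j => ?_⟩
  rw [hpq i j, h i.succ j.succ, hval i, hval j, Fin.castSucc_lt_castSucc_iff]

lemma low_contains_cons {p : Fin (k + 1) → Fin (k + 1)} {q : Fin k → Fin k}
    (hpq : ∀ i j : Fin k, q i < q j ↔ p i.succ < p j.succ)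
    (h0 : ∀ j : Fin k, p 0 < p j.succ) (σ' : Equiv.Perm (Fin m)) :
    PermContains σ' q → PermContains (low σ') p := by
  rintro ⟨f, hf, h⟩
  refine ⟨Fin.cases 0 (fun i => (f i).succ), ?_, ?_⟩
  · intro x y hxy
    cases y using Fin.cases with
    | zero => exact absurd hxy (Fin.not_lt_zero _)
    | succ j =>
      cases x using Fin.cases with
      | zero => simpa using Fin.succ_pos _
      | succ i =>
        simp only [Fin.cases_succ]
        exact Fin.succ_lt_succ_iff.mpr (hf (Fin.succ_lt_succ_iff.mp hxy))
  · intro x y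
    cases x using Fin.cases with
    | zero =>
      cases y using Fin.cases with
      | zero => simp
      | succ j =>
        simp only [Fin.cases_zero, Fin.cases_succ, low_zero, low_succ]
        exact iff_of_true (h0 j) (Fin.succ_pos _)
    | succ i =>
      cases y using Fin.cases with
      | zero =>
        simp only [Fin.cases_zero, Fin.cases_succ, low_zero, low_succ]
        exact iff_of_false (fun hlt => lt_asymm (h0 i) hlt) (Fin.not_lt_zero _)
      | succ j =>
        simp only [Fin.cases_succ, low_succ, Fin.succ_lt_succ_iff]
        rw [← hpq i j, h i j]

lemma high_contains_cons {p : Fin (k + 1) → Fin (k + 1)} {q : Fin k → Fin k}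
    (hpq : ∀ i j : Fin k, q i < q j ↔ p i.succ < p j.succ)
    (h0 : ∀ j : Fin k, p j.succ < p 0) (σ' : Equiv.Perm (Fin m)) :
    PermContains σ' q → PermContains (high σ') p := by
  rintro ⟨f, hf, h⟩
  refine ⟨Fin.cases 0 (fun i => (f i).succ), ?_, ?_⟩
  · intro x y hxy
    cases y using Fin.cases with
    | zero => exact absurd hxy (Fin.not_lt_zero _)
    | succ j =>
      cases x using Fin.cases with
      | zero => simpa using Fin.succ_pos _
      | succ i =>
        simp only [Fin.cases_succ]
        exact Fin.succ_lt_succ_iff.mpr (hf (Fin.succ_lt_succ_iff.mp hxy))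
  · intro x y
    cases x using Fin.cases with
    | zero =>
      cases y using Fin.cases with
      | zero => simp
      | succ j =>
        simp only [Fin.cases_zero, Fin.cases_succ, high_zero, high_succ]
        exact iff_of_false (fun hlt => lt_asymm (h0 j) hlt)
          (not_lt.mpr (Fin.castSucc_lt_last _).le)
    | succ i =>
      cases y using Fin.cases with
      | zero =>
        simp only [Fin.cases_zero, Fin.cases_succ, high_zero, high_succ]
        exact iff_of_true (h0 i) (Fin.castSucc_lt_last _)
      | succ j =>
        simp only [Fin.cases_succ, high_succ, Fin.castSucc_lt_castSucc_iff]
        rw [← hpq i j, h i j]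

end Stmt14Aux

open Stmt14Aux in
theorem stmt14 (k : ℕ) (hk : 1 ≤ k) (τ : Equiv.Perm (Fin (k + 1))) (τ' : Equiv.Perm (Fin k))
    (h1 : PermAvoids τ p213) (h2 : PermAvoids τ p231)
    (hiso : ∀ i j : Fin k, τ' i < τ' j ↔ τ i.succ < τ j.succ) :
    ∀ n, k + 1 ≤ n →
      Nat.card {σ : Equiv.Perm (Fin n) //
          PermAvoids σ p213 ∧ PermAvoids σ p231 ∧ PermAvoids σ ⇑τ}
        = Nat.card {σ : Equiv.Perm (Fin (n - 1)) //
            PermAvoids σ p213 ∧ PermAvoids σ p231 ∧ PermAvoids σ ⇑τ}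
        + Nat.card {σ : Equiv.Perm (Fin (n - 1)) //
            PermAvoids σ p213 ∧ PermAvoids σ p231 ∧ PermAvoids σ ⇑τ'} := by
  intro n hn
  obtain ⟨m, rfl⟩ : ∃ m, n = m + 1 := ⟨n - 1, by omega⟩
  have hm : 1 ≤ m := by omega
  have hlast0 : (0 : Fin (m + 1)) ≠ Fin.last m := by
    intro h
    have := congrArg Fin.val h
    simp [Fin.val_last] at this
    omega

  rw [← Nat.card_sum]
  have hj0 : ∀ i : Fin k, (i.succ : Fin (k + 1)) ≠ 0 := fun i => Fin.succ_ne_zero i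
  rcases first_extreme τ h1 h2 with h0 | h0
  · -- τ starts with its minimum: low gives τ'-avoiders, high gives τ-avoiders
    have hmin : ∀ j : Fin k, τ 0 < τ j.succ := by
      intro j
      rw [h0]
      exact Fin.pos_of_ne_zero (fun h => hj0 j (τ.injective (h.trans h0.symm)))
    refine Nat.card_congr ((Equiv.ofBijective (Sum.elim
      (fun x : {σ' : Equiv.Perm (Fin m) //
          PermAvoids σ' p213 ∧ PermAvoids σ' p231 ∧ PermAvoids σ' ⇑τ} =>
        (⟨high x.1, fun hc => x.2.1 (of_high_contains _ ⟨2, by decide⟩ hc),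
          fun hc => x.2.2.1 (of_high_contains _ ⟨1, by decide⟩ hc),
          fun hc => x.2.2.2 (of_high_contains _ ⟨(⟨0, hk⟩ : Fin k).succ, hmin _⟩ hc)⟩ :
          {σ : Equiv.Perm (Fin (m + 1)) //
            PermAvoids σ p213 ∧ PermAvoids σ p231 ∧ PermAvoids σ ⇑τ}))
      (fun x : {σ' : Equiv.Perm (Fin m) //
          PermAvoids σ' p213 ∧ PermAvoids σ' p231 ∧ PermAvoids σ' ⇑τ'} =>
        ⟨low x.1, fun hc => x.2.1 (of_low_contains _ ⟨1, by decide⟩ hc),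
          fun hc => x.2.2.1 (of_low_contains _ ⟨2, by decide⟩ hc),
          fun hc => x.2.2.2 (of_low_contains_tail (fun i j => hiso i j) _ hc)⟩))
      ⟨?_, ?_⟩).symm)
    · rintro (x | x) (y | y) hxy
      · exact congrArg Sum.inl (Subtype.ext (high_injective (congrArg Subtype.val hxy)))
      · exact absurd (congrArg (fun s => s.1 0) hxy)
          (fun h : high x.1 0 = low y.1 0 => by rw [high_zero, low_zero] at h; exact hlast0 h.symm)
      · exact absurd (congrArg (fun s => s.1 0) hxy)
          (fun h : low x.1 0 = high y.1 0 => by rw [high_zero, low_zero] at h; exact hlast0 h)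
      · exact congrArg Sum.inr (Subtype.ext (low_injective (congrArg Subtype.val hxy)))
    · rintro ⟨σ, hσ1, hσ2, hσ3⟩
      rcases first_extreme σ hσ1 hσ2 with hz | hz
      · obtain ⟨σ', rfl⟩ := exists_low σ hz
        exact ⟨Sum.inr ⟨σ', fun hc => hσ1 (low_contains _ hc),
          fun hc => hσ2 (low_contains _ hc),
          fun hc => hσ3 (low_contains_cons (fun i j => hiso i j) hmin _ hc)⟩, rfl⟩
      · obtain ⟨σ', rfl⟩ := exists_high σ hz
        exact ⟨Sum.inl ⟨σ', fun hc => hσ1 (high_contains _ hc),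
          fun hc => hσ2 (high_contains _ hc),
          fun hc => hσ3 (high_contains _ hc)⟩, rfl⟩
  · -- τ starts with its maximum: low gives τ-avoiders, high gives τ'-avoiders
    have hmax : ∀ j : Fin k, τ j.succ < τ 0 := by
      intro j
      rw [h0]
      exact lt_of_le_of_ne (Fin.le_last _)
        (fun h => hj0 j (τ.injective (h.trans h0.symm)))
    refine Nat.card_congr ((Equiv.ofBijective (Sum.elim
      (fun x : {σ' : Equiv.Perm (Fin m) //
          PermAvoids σ' p213 ∧ PermAvoids σ' p231 ∧ PermAvoids σ' ⇑τ} =>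
        (⟨low x.1, fun hc => x.2.1 (of_low_contains _ ⟨1, by decide⟩ hc),
          fun hc => x.2.2.1 (of_low_contains _ ⟨2, by decide⟩ hc),
          fun hc => x.2.2.2 (of_low_contains _ ⟨(⟨0, hk⟩ : Fin k).succ, hmax _⟩ hc)⟩ :
          {σ : Equiv.Perm (Fin (m + 1)) //
            PermAvoids σ p213 ∧ PermAvoids σ p231 ∧ PermAvoids σ ⇑τ}))
      (fun x : {σ' : Equiv.Perm (Fin m) //
          PermAvoids σ' p213 ∧ PermAvoids σ' p231 ∧ PermAvoids σ' ⇑τ'} =>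
        ⟨high x.1, fun hc => x.2.1 (of_high_contains _ ⟨2, by decide⟩ hc),
          fun hc => x.2.2.1 (of_high_contains _ ⟨1, by decide⟩ hc),
          fun hc => x.2.2.2 (of_high_contains_tail (fun i j => hiso i j) _ hc)⟩))
      ⟨?_, ?_⟩).symm)
    · rintro (x | x) (y | y) hxy
      · exact congrArg Sum.inl (Subtype.ext (low_injective (congrArg Subtype.val hxy)))
      · exact absurd (congrArg (fun s => s.1 0) hxy)
          (fun h : low x.1 0 = high y.1 0 => by rw [high_zero, low_zero] at h; exact hlast0 h)
      · exact absurd (congrArg (fun s => s.1 0) hxy)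
          (fun h : high x.1 0 = low y.1 0 => by rw [high_zero, low_zero] at h; exact hlast0 h.symm)
      · exact congrArg Sum.inr (Subtype.ext (high_injective (congrArg Subtype.val hxy)))
    · rintro ⟨σ, hσ1, hσ2, hσ3⟩
      rcases first_extreme σ hσ1 hσ2 with hz | hz
      · obtain ⟨σ', rfl⟩ := exists_low σ hz
        exact ⟨Sum.inl ⟨σ', fun hc => hσ1 (low_contains _ hc),
          fun hc => hσ2 (low_contains _ hc),
          fun hc => hσ3 (low_contains _ hc)⟩, rfl⟩
      · obtain ⟨σ', rfl⟩ := exists_high σ hz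
        exact ⟨Sum.inr ⟨σ', fun hc => hσ1 (high_contains _ hc),
          fun hc => hσ2 (high_contains _ hc),
          fun hc => hσ3 (high_contains_cons (fun i j => hiso i j) hmax _ hc)⟩, rfl⟩
end

section
/- The number of permutations in S_n avoiding the patterns 213, 231, and 1432 equals C(n,2) + 1 for all n ≥ 1. -/
namespace Stmt15Aux

open Equiv Function

def q1432 : Fin 4 → Fin 4 := ![0, 3, 2, 1]

variable {m k : ℕ}

/-- prepend the value `a` to a permutation. -/
def consFun (a : Fin (m + 1)) (τ : Equiv.Perm (Fin m)) : Fin (m + 1) → Fin (m + 1) :=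
  Fin.cases a (fun i => a.succAbove (τ i))

lemma consFun_injective (a : Fin (m + 1)) (τ : Equiv.Perm (Fin m)) :
    Function.Injective (consFun a τ) := by
  intro i j h
  induction i using Fin.cases with
  | zero =>
    induction j using Fin.cases with
    | zero => rfl
    | succ j =>
      simp only [consFun, Fin.cases_zero, Fin.cases_succ] at h
      exact absurd h.symm (Fin.succAbove_ne a (τ j))
  | succ i =>
    induction j using Fin.cases with
    | zero =>
      simp only [consFun, Fin.cases_zero, Fin.cases_succ] at h
      exact absurd h (Fin.succAbove_ne a (τ i))
    | succ j =>
      simp only [consFun, Fin.cases_succ] at h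
      have := τ.injective (Fin.succAbove_right_injective h)
      exact congrArg Fin.succ this

noncomputable def consP (a : Fin (m + 1)) (τ : Equiv.Perm (Fin m)) : Equiv.Perm (Fin (m + 1)) :=
  Equiv.ofBijective _ ((Finite.injective_iff_bijective).1 (consFun_injective a τ))

@[simp] lemma consP_zero (a : Fin (m + 1)) (τ : Equiv.Perm (Fin m)) : consP a τ 0 = a := by
  simp [consP, Equiv.ofBijective_apply, consFun]

@[simp] lemma consP_succ (a : Fin (m + 1)) (τ : Equiv.Perm (Fin m)) (i : Fin m) :
    consP a τ i.succ = a.succAbove (τ i) := by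
  simp [consP, Equiv.ofBijective_apply, consFun]

lemma consP_inj (a : Fin (m + 1)) : Function.Injective (consP a) := by
  intro τ τ' h
  ext i
  have h2 : consP a τ i.succ = consP a τ' i.succ := by rw [h]
  rw [consP_succ, consP_succ] at h2
  have := Fin.succAbove_right_injective h2
  exact congrArg Fin.val this

/-- shift an occurrence up -/
lemma contains_consP_of_contains {a : Fin (m + 1)} {τ : Equiv.Perm (Fin m)}
    {p : Fin k → Fin k} (h : PermContains τ p) : PermContains (consP a τ) p := by
  obtain ⟨g, hg, hp⟩ := h
  refine ⟨fun i => (g i).succ, fun i j hij => Fin.succ_lt_succ_iff.2 (hg hij), ?_⟩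
  intro i j
  rw [consP_succ, consP_succ, hp]
  exact ((Fin.strictMono_succAbove a).lt_iff_lt).symm

lemma occ_ne_zero {f : Fin (k + 1) → Fin (m + 1)} (hf : StrictMono f) (h00 : f 0 ≠ 0) :
    ∀ i, f i ≠ 0 := fun i =>
  Fin.pos_iff_ne_zero.1
    (lt_of_lt_of_le (Fin.pos_iff_ne_zero.2 h00) (hf.monotone (Fin.zero_le i)))

/-- shift an occurrence avoiding position 0 down -/
lemma contains_of_occ_ne_zero {a : Fin (m + 1)} {τ : Equiv.Perm (Fin m)}
    {p : Fin k → Fin k} {f : Fin k → Fin (m + 1)} (hf : StrictMono f)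
    (h0 : ∀ i, f i ≠ 0)
    (hp : ∀ i j, p i < p j ↔ consP a τ (f i) < consP a τ (f j)) : PermContains τ p := by
  refine ⟨fun i => (f i).pred (h0 i), Fin.strictMono_pred_comp h0 hf, ?_⟩
  intro i j
  have hv : ∀ i, consP a τ (f i) = a.succAbove (τ ((f i).pred (h0 i))) := by
    intro i
    conv_lhs => rw [← Fin.succ_pred (f i) (h0 i)]
    rw [consP_succ]
  rw [hp i j, hv i, hv j]
  exact (Fin.strictMono_succAbove a).lt_iff_lt

lemma contains_of_contains_consP_last {τ : Equiv.Perm (Fin m)}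
    {p : Fin (k + 1) → Fin (k + 1)} (hmax : ∃ j, p 0 < p j)
    (h : PermContains (consP (Fin.last m) τ) p) : PermContains τ p := by
  obtain ⟨f, hf, hp⟩ := h
  have h00 : f 0 ≠ 0 := by
    intro h0
    obtain ⟨j, hj⟩ := hmax
    have h2 := (hp 0 j).1 hj
    rw [h0, consP_zero] at h2
    exact absurd (Fin.le_last _) (not_le.2 h2)
  exact contains_of_occ_ne_zero hf (occ_ne_zero hf h00) hp

lemma contains_of_contains_consP_zero {τ : Equiv.Perm (Fin m)}
    {p : Fin (k + 1) → Fin (k + 1)} (hmin : ∃ j, p j < p 0)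
    (h : PermContains (consP (0 : Fin (m + 1)) τ) p) : PermContains τ p := by
  obtain ⟨f, hf, hp⟩ := h
  have h00 : f 0 ≠ 0 := by
    intro h0
    obtain ⟨j, hj⟩ := hmin
    have h2 := (hp j 0).1 hj
    rw [h0, consP_zero] at h2
    exact Fin.not_lt_zero _ h2
  exact contains_of_occ_ne_zero hf (occ_ne_zero hf h00) hp

/-- 1432 in `consP 0 τ` gives 1432 or 321 in `τ`. -/
lemma contains1432_consP_zero {τ : Equiv.Perm (Fin m)}
    (h : PermContains (consP (0 : Fin (m + 1)) τ) q1432) :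
    PermContains τ q1432 ∨ PermContains τ p321 := by
  obtain ⟨f, hf, hp⟩ := h
  rcases eq_or_ne (f 0) 0 with h0 | h0
  · right
    have hne : ∀ i : Fin 3, f i.succ ≠ 0 := by
      intro i
      have : f 0 < f i.succ := hf (Fin.succ_pos i)
      rw [h0] at this
      exact Fin.pos_iff_ne_zero.1 this
    refine ⟨fun i => (f i.succ).pred (hne i),
      Fin.strictMono_pred_comp hne (fun i j hij => hf (Fin.succ_lt_succ_iff.2 hij)), ?_⟩
    intro i j
    have hv : ∀ i : Fin 3, consP (0 : Fin (m + 1)) τ (f i.succ)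
        = (τ ((f i.succ).pred (hne i))).succ := by
      intro i
      conv_lhs => rw [← Fin.succ_pred (f i.succ) (hne i)]
      rw [consP_succ, Fin.succAbove_zero]
    have hbridge : p321 i < p321 j ↔ q1432 i.succ < q1432 j.succ := by
      revert i j; decide
    rw [hbridge, hp i.succ j.succ, hv i, hv j]
    exact Fin.succ_lt_succ_iff
  · exact Or.inl (contains_of_occ_ne_zero hf (occ_ne_zero hf h0) hp)

/-- 321 in `τ` gives 1432 in `consP 0 τ`. -/
lemma contains1432_of_contains321 {τ : Equiv.Perm (Fin m)}
    (h : PermContains τ p321) : PermContains (consP (0 : Fin (m + 1)) τ) q1432 := by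
  obtain ⟨g, hg, hp⟩ := h
  refine ⟨Fin.cases 0 (fun i => (g i).succ), ?_, ?_⟩
  · intro i j hij
    induction i using Fin.cases with
    | zero =>
      induction j using Fin.cases with
      | zero => exact absurd hij (lt_irrefl _)
      | succ j => simp only [Fin.cases_zero, Fin.cases_succ]; exact Fin.succ_pos _
    | succ i =>
      induction j using Fin.cases with
      | zero => exact absurd hij (by simp [Fin.lt_iff_val_lt_val])
      | succ j =>
        simp only [Fin.cases_succ]
        exact Fin.succ_lt_succ_iff.2 (hg (Fin.succ_lt_succ_iff.1 hij))
  · intro i j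
    induction i using Fin.cases with
    | zero =>
      induction j using Fin.cases with
      | zero => simp
      | succ j =>
        simp only [Fin.cases_zero, Fin.cases_succ, consP_zero, consP_succ, Fin.succAbove_zero]
        have h1 : q1432 0 < q1432 j.succ := by revert j; decide
        simp [h1, Fin.succ_pos]
    | succ i =>
      induction j using Fin.cases with
      | zero =>
        simp only [Fin.cases_zero, Fin.cases_succ, consP_zero, consP_succ, Fin.succAbove_zero]
        have h1 : ¬ q1432 i.succ < q1432 0 := by revert i; decide
        simp [h1]
      | succ j =>
        simp only [Fin.cases_succ, consP_succ, Fin.succAbove_zero]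
        have hbridge : q1432 i.succ < q1432 j.succ ↔ p321 i < p321 j := by
          revert i j; decide
        rw [hbridge, hp i j]
        exact (Fin.succ_lt_succ_iff).symm

/-- 1432 contains 321 -/
lemma contains321_of_contains1432 {n : ℕ} {σ : Equiv.Perm (Fin n)}
    (h : PermContains σ q1432) : PermContains σ p321 := by
  obtain ⟨f, hf, hp⟩ := h
  refine ⟨fun i => f i.succ, fun i j hij => hf (Fin.succ_lt_succ_iff.2 hij), ?_⟩
  intro i j
  have hbridge : p321 i < p321 j ↔ q1432 i.succ < q1432 j.succ := by revert i j; decide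
  rw [hbridge, hp i.succ j.succ]


def f3 {α : Type*} (a b c : α) : Fin 3 → α := fun i => if i = 0 then a else if i = 1 then b else c

lemma f3_strictMono {a b c : Fin m} (h1 : a < b) (h2 : b < c) :
    StrictMono (f3 a b c) := by
  have h3 := h1.trans h2
  intro x y hxy
  fin_cases x <;> fin_cases y <;>
    first
    | exact absurd hxy (by decide)
    | simp_all [f3]

lemma occ3 {n : ℕ} (σ : Equiv.Perm (Fin n)) (p : Fin 3 → Fin 3) (x y z : Fin n)
    (hxy : x < y) (hyz : y < z)
    (h01 : p 0 < p 1 ↔ σ x < σ y) (h02 : p 0 < p 2 ↔ σ x < σ z)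
    (h12 : p 1 < p 2 ↔ σ y < σ z) (h10 : p 1 < p 0 ↔ σ y < σ x)
    (h20 : p 2 < p 0 ↔ σ z < σ x) (h21 : p 2 < p 1 ↔ σ z < σ y) :
    PermContains σ p := by
  refine ⟨f3 x y z, f3_strictMono hxy hyz, ?_⟩
  intro i j
  fin_cases i <;> fin_cases j
  · simp
  · exact h01
  · exact h02
  · exact h10
  · simp
  · exact h12
  · exact h20
  · exact h21
  · simp

lemma zero_or_last {σ : Equiv.Perm (Fin (m + 1))} (h213 : PermAvoids σ p213)
    (h231 : PermAvoids σ p231) : σ 0 = 0 ∨ σ 0 = Fin.last m := by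
  by_contra hc
  push_neg at hc
  obtain ⟨h0, hl⟩ := hc
  have hpos : (0 : Fin (m + 1)) < σ 0 := Fin.pos_iff_ne_zero.2 h0
  have hlt : σ 0 < Fin.last m := lt_of_le_of_ne (Fin.le_last _) hl
  have hσj : σ (σ.symm 0) = 0 := σ.apply_symm_apply 0
  have hσl : σ (σ.symm (Fin.last m)) = Fin.last m := σ.apply_symm_apply _
  set j := σ.symm 0 with hj
  set l := σ.symm (Fin.last m) with hl2
  have hj0 : (0 : Fin (m + 1)) < j := by
    refine Fin.pos_iff_ne_zero.2 fun h => h0 ?_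
    rw [h] at hσj; exact hσj
  have hl0 : (0 : Fin (m + 1)) < l := by
    refine Fin.pos_iff_ne_zero.2 fun h => hl ?_
    rw [h] at hσl; exact hσl
  have hne : (0 : Fin (m + 1)) ≠ Fin.last m := ne_of_lt (hpos.trans hlt)
  have hjl : j ≠ l := by
    intro h
    rw [h, hσl] at hσj
    exact hne hσj.symm
  rcases lt_or_gt_of_ne hjl with h | h
  · refine h213 (occ3 σ p213 0 j l hj0 h ?_ ?_ ?_ ?_ ?_ ?_)
    · exact iff_of_false (by decide) (by rw [hσj]; exact Fin.not_lt_zero _)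
    · exact iff_of_true (by decide) (by rw [hσl]; exact hlt)
    · exact iff_of_true (by decide) (by rw [hσj, hσl]; exact hpos.trans hlt)
    · exact iff_of_true (by decide) (by rw [hσj]; exact hpos)
    · exact iff_of_false (by decide) (by rw [hσl]; exact not_lt.2 (Fin.le_last _))
    · exact iff_of_false (by decide) (by rw [hσl, hσj]; exact Fin.not_lt_zero _)
  · refine h231 (occ3 σ p231 0 l j hl0 h ?_ ?_ ?_ ?_ ?_ ?_)
    · exact iff_of_true (by decide) (by rw [hσl]; exact hlt)
    · exact iff_of_false (by decide) (by rw [hσj]; exact Fin.not_lt_zero _)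
    · exact iff_of_false (by decide) (by rw [hσl, hσj]; exact Fin.not_lt_zero _)
    · exact iff_of_false (by decide) (by rw [hσl]; exact not_lt.2 (Fin.le_last _))
    · exact iff_of_true (by decide) (by rw [hσj]; exact hpos)
    · exact iff_of_true (by decide) (by rw [hσj, hσl]; exact hpos.trans hlt)

lemma id_avoids {p : Fin k → Fin k} (i j : Fin k) (hij : i < j) (hp : p j < p i) :
    PermAvoids (1 : Equiv.Perm (Fin m)) p := by
  rintro ⟨f, hf, hiff⟩
  have h1 : f i < f j := hf hij
  have h2 := (hiff j i).1 hp
  simp only [Equiv.Perm.one_apply] at h2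
  exact absurd h1 (not_lt.2 h2.le)

lemma le_apply_of_strictMono : ∀ {m : ℕ} (f : Fin m → Fin m), StrictMono f → ∀ i, i ≤ f i := by
  intro m f hf i
  induction m with
  | zero => exact i.elim0
  | succ m _ =>
    induction i using Fin.induction with
    | zero => exact Fin.zero_le _
    | succ i ih =>
      have h2 : f i.castSucc < f i.succ := hf (Fin.castSucc_lt_succ : i.castSucc < i.succ)
      exact Fin.castSucc_lt_iff_succ_le.1 (lt_of_le_of_lt ih h2)

lemma strictMono_perm_eq_one {σ : Equiv.Perm (Fin m)} (h : StrictMono σ) : σ = 1 := by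
  have h1 := le_apply_of_strictMono σ h
  have hg : StrictMono (fun j : Fin m => (σ j.rev).rev) :=
    fun x y hxy => Fin.rev_lt_rev.2 (h (Fin.rev_lt_rev.2 hxy))
  have h2 : ∀ i, σ i ≤ i := by
    intro i
    have h3 := le_apply_of_strictMono _ hg i.rev
    simp only [Fin.rev_rev] at h3
    exact Fin.rev_le_rev.1 h3
  exact Equiv.ext fun i => le_antisymm (h2 i) (h1 i)

lemma exists_consP_zero {σ : Equiv.Perm (Fin (m + 1))} (h : σ 0 = 0) :
    ∃ τ, consP 0 τ = σ := by
  have hne : ∀ i : Fin m, σ i.succ ≠ 0 := by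
    intro i hi
    exact Fin.succ_ne_zero i (σ.injective (hi.trans h.symm))
  have hinj : Function.Injective (fun i => (σ i.succ).pred (hne i)) := by
    intro i j hij
    have h4 : σ i.succ = σ j.succ := by
      rw [← Fin.succ_pred (σ i.succ) (hne i), ← Fin.succ_pred (σ j.succ) (hne j)]
      exact congrArg Fin.succ hij
    exact Fin.succ_injective _ (σ.injective h4)
  refine ⟨Equiv.ofBijective _ ((Finite.injective_iff_bijective).1 hinj), Equiv.ext fun i => ?_⟩
  induction i using Fin.cases with
  | zero => rw [consP_zero, h]
  | succ i =>
    rw [consP_succ]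
    show (0 : Fin (m + 1)).succAbove ((σ i.succ).pred (hne i)) = σ i.succ
    rw [Fin.succAbove_zero_apply]
    exact Fin.succ_pred _ _

lemma exists_consP_last {σ : Equiv.Perm (Fin (m + 1))} (h : σ 0 = Fin.last m) :
    ∃ τ, consP (Fin.last m) τ = σ := by
  have hne : ∀ i : Fin m, σ i.succ ≠ Fin.last m := by
    intro i hi
    exact Fin.succ_ne_zero i (σ.injective (hi.trans h.symm))
  have hinj : Function.Injective (fun i => (σ i.succ).castPred (hne i)) := by
    intro i j hij
    have h4 : σ i.succ = σ j.succ := by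
      rw [← Fin.castSucc_castPred (σ i.succ) (hne i),
        ← Fin.castSucc_castPred (σ j.succ) (hne j)]
      exact congrArg Fin.castSucc hij
    exact Fin.succ_injective _ (σ.injective h4)
  refine ⟨Equiv.ofBijective _ ((Finite.injective_iff_bijective).1 hinj), Equiv.ext fun i => ?_⟩
  induction i using Fin.cases with
  | zero => rw [consP_zero, h]
  | succ i =>
    rw [consP_succ]
    show (Fin.last m).succAbove ((σ i.succ).castPred (hne i)) = σ i.succ
    rw [Fin.succAbove_last_apply]
    exact Fin.castSucc_castPred _ _

def Q3 (τ : Equiv.Perm (Fin m)) : Prop :=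
  PermAvoids τ p213 ∧ PermAvoids τ p231 ∧ PermAvoids τ p321

def Q4 (τ : Equiv.Perm (Fin m)) : Prop :=
  PermAvoids τ p213 ∧ PermAvoids τ p231 ∧ PermAvoids τ q1432

lemma card_last_Q4 (m : ℕ) :
    Nat.card {σ : Equiv.Perm (Fin (m + 1)) // Q4 σ ∧ σ 0 = Fin.last m} =
      Nat.card {τ : Equiv.Perm (Fin m) // Q4 τ} := by
  symm
  refine Nat.card_eq_of_bijective
    (fun t => ⟨consP (Fin.last m) t.1,
      ⟨⟨fun hc => t.2.1 (contains_of_contains_consP_last ⟨2, by decide⟩ hc),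
        fun hc => t.2.2.1 (contains_of_contains_consP_last ⟨1, by decide⟩ hc),
        fun hc => t.2.2.2 (contains_of_contains_consP_last ⟨1, by decide⟩ hc)⟩,
       consP_zero _ _⟩⟩) ⟨?_, ?_⟩
  · intro t t' h
    exact Subtype.ext (consP_inj _ (congrArg Subtype.val h))
  · rintro ⟨σ, ⟨hQ, h0⟩⟩
    obtain ⟨τ, rfl⟩ := exists_consP_last h0
    exact ⟨⟨τ, fun hc => hQ.1 (contains_consP_of_contains hc),
      fun hc => hQ.2.1 (contains_consP_of_contains hc),
      fun hc => hQ.2.2 (contains_consP_of_contains hc)⟩, rfl⟩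

lemma card_zero_Q4 (m : ℕ) :
    Nat.card {σ : Equiv.Perm (Fin (m + 1)) // Q4 σ ∧ σ 0 = 0} =
      Nat.card {τ : Equiv.Perm (Fin m) // Q3 τ} := by
  symm
  refine Nat.card_eq_of_bijective
    (fun t => ⟨consP 0 t.1,
      ⟨⟨fun hc => t.2.1 (contains_of_contains_consP_zero ⟨1, by decide⟩ hc),
        fun hc => t.2.2.1 (contains_of_contains_consP_zero ⟨2, by decide⟩ hc),
        fun hc => (contains1432_consP_zero hc).elim
          (fun h => t.2.2.2 (contains321_of_contains1432 h)) t.2.2.2⟩,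
       consP_zero _ _⟩⟩) ⟨?_, ?_⟩
  · intro t t' h
    exact Subtype.ext (consP_inj _ (congrArg Subtype.val h))
  · rintro ⟨σ, ⟨hQ, h0⟩⟩
    obtain ⟨τ, rfl⟩ := exists_consP_zero h0
    exact ⟨⟨τ, fun hc => hQ.1 (contains_consP_of_contains hc),
      fun hc => hQ.2.1 (contains_consP_of_contains hc),
      fun hc => hQ.2.2 (contains1432_of_contains321 hc)⟩, rfl⟩

lemma card_zero_Q3 (m : ℕ) :
    Nat.card {σ : Equiv.Perm (Fin (m + 1)) // Q3 σ ∧ σ 0 = 0} =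
      Nat.card {τ : Equiv.Perm (Fin m) // Q3 τ} := by
  symm
  refine Nat.card_eq_of_bijective
    (fun t => ⟨consP 0 t.1,
      ⟨⟨fun hc => t.2.1 (contains_of_contains_consP_zero ⟨1, by decide⟩ hc),
        fun hc => t.2.2.1 (contains_of_contains_consP_zero ⟨2, by decide⟩ hc),
        fun hc => t.2.2.2 (contains_of_contains_consP_zero ⟨1, by decide⟩ hc)⟩,
       consP_zero _ _⟩⟩) ⟨?_, ?_⟩
  · intro t t' h
    exact Subtype.ext (consP_inj _ (congrArg Subtype.val h))
  · rintro ⟨σ, ⟨hQ, h0⟩⟩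
    obtain ⟨τ, rfl⟩ := exists_consP_zero h0
    exact ⟨⟨τ, fun hc => hQ.1 (contains_consP_of_contains hc),
      fun hc => hQ.2.1 (contains_consP_of_contains hc),
      fun hc => hQ.2.2 (contains_consP_of_contains hc)⟩, rfl⟩

lemma consP_last_one_succ (i : Fin m) :
    consP (Fin.last m) 1 i.succ = i.castSucc := by
  rw [consP_succ]
  exact Fin.succAbove_last_apply i

lemma card_last_Q3 (m : ℕ) :
    Nat.card {σ : Equiv.Perm (Fin (m + 1)) // Q3 σ ∧ σ 0 = Fin.last m} = 1 := by
  have key : ∀ {σ : Equiv.Perm (Fin (m + 1))}, Q3 σ → σ 0 = Fin.last m →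
      σ = consP (Fin.last m) 1 := by
    intro σ hQ h0
    obtain ⟨τ, rfl⟩ := exists_consP_last h0
    suffices hτ : τ = 1 by rw [hτ]
    apply strictMono_perm_eq_one
    intro i j hij
    rcases lt_trichotomy (τ i) (τ j) with h | h | h
    · exact h
    · exact absurd (τ.injective h) (ne_of_lt hij)
    · exfalso
      apply hQ.2.2
      have hv0 : consP (Fin.last m) τ 0 = Fin.last m := consP_zero _ _
      have hvs : ∀ i : Fin m, consP (Fin.last m) τ i.succ = (τ i).castSucc := by
        intro i; rw [consP_succ]; exact Fin.succAbove_last_apply _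
      refine occ3 _ p321 0 i.succ j.succ (Fin.succ_pos i) (Fin.succ_lt_succ_iff.2 hij)
        ?_ ?_ ?_ ?_ ?_ ?_
      · exact iff_of_false (by decide)
          (by rw [hv0, hvs i]; exact not_lt.2 (Fin.le_last _))
      · exact iff_of_false (by decide)
          (by rw [hv0, hvs j]; exact not_lt.2 (Fin.le_last _))
      · exact iff_of_false (by decide)
          (by rw [hvs i, hvs j, Fin.castSucc_lt_castSucc_iff]; exact not_lt.2 h.le)
      · exact iff_of_true (by decide) (by rw [hv0, hvs i]; exact Fin.castSucc_lt_last _)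
      · exact iff_of_true (by decide) (by rw [hv0, hvs j]; exact Fin.castSucc_lt_last _)
      · exact iff_of_true (by decide)
          (by rw [hvs i, hvs j, Fin.castSucc_lt_castSucc_iff]; exact h)
  rw [Nat.card_eq_one_iff_unique]
  constructor
  · constructor
    rintro ⟨σ, hσ, h0⟩ ⟨σ', hσ', h0'⟩
    exact Subtype.ext ((key hσ h0).trans (key hσ' h0').symm)
  · refine ⟨consP (Fin.last m) 1, ⟨?_, ?_, ?_⟩, consP_zero _ _⟩
    · exact fun hc => id_avoids 0 1 (by decide) (by decide)
        (contains_of_contains_consP_last ⟨2, by decide⟩ hc)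
    · exact fun hc => id_avoids 1 2 (by decide) (by decide)
        (contains_of_contains_consP_last ⟨1, by decide⟩ hc)
    · rintro ⟨f, hf, hp⟩
      rcases eq_or_ne (f 0) 0 with h0 | h0
      · have hne1 : f 1 ≠ 0 := by
          have : f 0 < f 1 := hf (by decide)
          rw [h0] at this
          exact Fin.pos_iff_ne_zero.1 this
        have hne2 : f 2 ≠ 0 := by
          have : f 0 < f 2 := hf (by decide)
          rw [h0] at this
          exact Fin.pos_iff_ne_zero.1 this
        have e : ∀ (i : Fin (m + 1)) (h : i ≠ 0),
            consP (Fin.last m) 1 i = (i.pred h).castSucc := by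
          intro i h
          conv_lhs => rw [← Fin.succ_pred i h]
          exact consP_last_one_succ _
        have h2 := (hp 2 1).1 (by decide)
        rw [e _ hne1, e _ hne2, Fin.castSucc_lt_castSucc_iff, Fin.pred_lt_pred_iff] at h2
        exact absurd (hf (show (1 : Fin 3) < 2 by decide)) (not_lt.2 h2.le)
      · exact id_avoids 0 1 (by decide) (by decide)
          (contains_of_occ_ne_zero hf (occ_ne_zero hf h0) hp)

open Classical in
lemma card_split {m : ℕ} (hm : 1 ≤ m) (P : Equiv.Perm (Fin (m + 1)) → Prop)
    (h : ∀ σ, P σ → σ 0 = 0 ∨ σ 0 = Fin.last m) :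
    Nat.card {σ // P σ} =
      Nat.card {σ // P σ ∧ σ 0 = 0} + Nat.card {σ // P σ ∧ σ 0 = Fin.last m} := by
  have hne : (0 : Fin (m + 1)) ≠ Fin.last m := by
    intro hh
    have h2 := congrArg Fin.val hh
    simp [Fin.last] at h2
    omega
  have e1 : {σ // P σ} ≃ {σ // (P σ ∧ σ 0 = 0) ∨ (P σ ∧ σ 0 = Fin.last m)} :=
    Equiv.subtypeEquivRight (fun σ => by
      constructor
      · intro h'
        rcases h σ h' with h2 | h2
        · exact Or.inl ⟨h', h2⟩
        · exact Or.inr ⟨h', h2⟩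
      · rintro (⟨h1, -⟩ | ⟨h1, -⟩) <;> exact h1)
  have hdisj : Disjoint (fun σ : Equiv.Perm (Fin (m + 1)) => P σ ∧ σ 0 = 0)
      (fun σ => P σ ∧ σ 0 = Fin.last m) := by
    rw [Pi.disjoint_iff]
    intro σ
    rw [disjoint_iff_inf_le]
    rintro ⟨⟨-, h1⟩, ⟨-, h2⟩⟩
    exact hne (h1.symm.trans h2)
  rw [Nat.card_congr e1, Nat.card_congr (subtypeOrEquiv _ _ hdisj), Nat.card_sum]

lemma avoids_one {j : ℕ} (σ : Equiv.Perm (Fin 1)) (p : Fin (j + 2) → Fin (j + 2)) :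
    PermAvoids σ p := by
  rintro ⟨f, hf, -⟩
  have h1 := hf (show (0 : Fin (j + 2)) < 1 from Fin.zero_lt_one)
  rw [Subsingleton.elim (f 0) (f 1)] at h1
  exact lt_irrefl _ h1

lemma cardQ3_one : Nat.card {τ : Equiv.Perm (Fin 1) // Q3 τ} = 1 := by
  rw [Nat.card_eq_one_iff_unique]
  exact ⟨⟨fun a b => Subtype.ext (Subsingleton.elim _ _)⟩,
    ⟨1, avoids_one _ _, avoids_one _ _, avoids_one _ _⟩⟩

lemma cardQ4_one : Nat.card {τ : Equiv.Perm (Fin 1) // Q4 τ} = 1 := by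
  rw [Nat.card_eq_one_iff_unique]
  exact ⟨⟨fun a b => Subtype.ext (Subsingleton.elim _ _)⟩,
    ⟨1, avoids_one _ _, avoids_one _ _, avoids_one _ _⟩⟩

lemma cardQ3 : ∀ m : ℕ, 1 ≤ m → Nat.card {τ : Equiv.Perm (Fin m) // Q3 τ} = m := by
  intro m
  induction m with
  | zero => exact fun h => absurd h (by omega)
  | succ m ih =>
    intro _
    rcases Nat.eq_zero_or_pos m with rfl | hm
    · exact cardQ3_one
    · rw [card_split hm _ (fun σ hσ => zero_or_last hσ.1 hσ.2.1), card_zero_Q3,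
        card_last_Q3, ih hm]

lemma cardQ4 : ∀ m : ℕ, 1 ≤ m →
    Nat.card {τ : Equiv.Perm (Fin m) // Q4 τ} = Nat.choose m 2 + 1 := by
  intro m
  induction m with
  | zero => exact fun h => absurd h (by omega)
  | succ m ih =>
    intro _
    rcases Nat.eq_zero_or_pos m with rfl | hm
    · simpa using cardQ4_one
    · rw [card_split hm _ (fun σ hσ => zero_or_last hσ.1 hσ.2.1), card_zero_Q4,
        card_last_Q4, cardQ3 m hm, ih hm]
      have h2 : Nat.choose (m + 1) 2 = Nat.choose m 1 + Nat.choose m 2 :=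
        Nat.choose_succ_succ m 1
      rw [h2, Nat.choose_one_right]
      omega

end Stmt15Aux

theorem stmt15 :
    ∀ n, 1 ≤ n → Nat.card {σ : Equiv.Perm (Fin n) //
      PermAvoids σ p213 ∧ PermAvoids σ p231 ∧ PermAvoids σ (![0, 3, 2, 1] : Fin 4 → Fin 4)}
      = Nat.choose n 2 + 1 := by
  exact Stmt15Aux.cardQ4
end
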